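/- Let V ⊆ Mₙ(ℂ) be a complex linear subspace with an orthonormal basis (A₁, …, A_m) with respect to the Frobenius inner product. If a unitary matrix U ∈ Mₙ(ℂ) satisfies U V Uᴴ = V, then U commutes with the matrix ∑ᵢ Aᵢ Aᵢᴴ: U · (∑ᵢ Aᵢ Aᵢᴴ) = (∑ᵢ Aᵢ Aᵢᴴ) · U. (In other words, every unitary automorphism of the quantum graph V commutes with its degree matrix D = n·∑ᵢ Aᵢ Aᵢᴴ.) -/

import Mathlib

open Matrix

/-- Every unitary preserving (under conjugation) a subspace `V ⊆ Mₙ(ℂ)` with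
Frobenius-orthonormal basis `(Aᵢ)` commutes with `∑ᵢ Aᵢ Aᵢᴴ` (equivalently, with the degree
matrix `D = n ∑ᵢ Aᵢ Aᵢᴴ` of the quantum graph `V`). -/
theorem unitary_automorphism_commutes_with_degree_matrix
    (n m : ℕ) (V : Submodule ℂ (Matrix (Fin n) (Fin n) ℂ))
    (A : Fin m → Matrix (Fin n) (Fin n) ℂ)
    (hmem : ∀ i, A i ∈ V)
    (hspan : V ≤ Submodule.span ℂ (Set.range A))
    (horth : ∀ i j, ((A i)ᴴ * A j).trace = if i = j then 1 else 0)
    (U : Matrix (Fin n) (Fin n) ℂ) (hU : U ∈ Matrix.unitaryGroup (Fin n) ℂ)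
    (hUV : (fun x => U * x * Uᴴ) '' (V : Set (Matrix (Fin n) (Fin n) ℂ))
      = (V : Set (Matrix (Fin n) (Fin n) ℂ))) :
    U * (∑ i, A i * (A i)ᴴ) = (∑ i, A i * (A i)ᴴ) * U := by
  have hU1 : Uᴴ * U = 1 := hU.1
  set B : Fin m → Matrix (Fin n) (Fin n) ℂ := fun i => U * A i * Uᴴ with hBdef
  -- B i lies in the span of A
  have hBmem : ∀ i, B i ∈ Submodule.span ℂ (Set.range A) := by
    intro i
    apply hspan
    have : B i ∈ (fun x => U * x * Uᴴ) '' (V : Set (Matrix (Fin n) (Fin n) ℂ)) :=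
      ⟨A i, hmem i, rfl⟩
    rwa [hUV] at this
  choose c hc using fun i => (Submodule.mem_span_range_iff_exists_fun ℂ).mp (hBmem i)
  -- B is orthonormal
  have hconj : ∀ X Y : Matrix (Fin n) (Fin n) ℂ,
      (U * X * Uᴴ)ᴴ * (U * Y * Uᴴ) = U * (Xᴴ * Y) * Uᴴ := by
    intro X Y
    calc (U * X * Uᴴ)ᴴ * (U * Y * Uᴴ)
        = U * (Xᴴ * ((Uᴴ * U) * (Y * Uᴴ))) := by
          simp [conjTranspose_mul, Matrix.mul_assoc]
      _ = U * (Xᴴ * Y) * Uᴴ := by rw [hU1, one_mul]; simp [Matrix.mul_assoc]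
  have htr : ∀ X : Matrix (Fin n) (Fin n) ℂ, (U * X * Uᴴ).trace = X.trace := by
    intro X
    rw [trace_mul_comm, ← Matrix.mul_assoc, hU1, one_mul]
  have orthB : ∀ i j, ((B i)ᴴ * B j).trace = if i = j then 1 else 0 := by
    intro i j
    rw [hBdef]
    simp only [hconj, htr]
    exact horth i j
  -- orthogonality relations for the coefficients
  have hcc : ∀ i j, (∑ k, star (c i k) * c j k) = if i = j then 1 else 0 := by
    intro i j
    have h := orthB i j
    rw [← hc i, ← hc j] at h
    rw [← h]
    simp only [conjTranspose_sum, conjTranspose_smul, Finset.sum_mul, Finset.mul_sum,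
      smul_mul_assoc, mul_smul_comm, trace_sum, trace_smul, smul_smul, horth, smul_eq_mul,
      mul_ite, mul_one, mul_zero, Finset.sum_ite_eq, Finset.sum_ite_eq', Finset.mem_univ,
      if_true]
    exact Finset.sum_congr rfl fun k _ => mul_comm _ _
  set C : Matrix (Fin m) (Fin m) ℂ := Matrix.of (fun i j => c i j) with hCdef
  have hCCt : C * Cᴴ = 1 := by
    ext i j
    have := hcc j i
    simp only [Matrix.mul_apply, conjTranspose_apply, hCdef, Matrix.of_apply,
      Matrix.one_apply]
    rw [show (∑ k, c i k * star (c j k)) = ∑ k, star (c j k) * c i k from by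
      simp [mul_comm], hcc j i]
    simp [eq_comm]
  have hCtC : Cᴴ * C = 1 := mul_eq_one_comm.mp hCCt
  have hcc' : ∀ k l, (∑ i, c i k * star (c i l)) = if l = k then 1 else 0 := by
    intro k l
    have := congrFun (congrFun hCtC l) k
    simp only [Matrix.mul_apply, conjTranspose_apply, hCdef, Matrix.of_apply,
      Matrix.one_apply] at this
    rw [← this]
    simp [mul_comm]
  -- the key invariance
  have key : (∑ i, B i * (B i)ᴴ) = ∑ k, A k * (A k)ᴴ := by
    calc (∑ i, B i * (B i)ᴴ)
        = ∑ i, (∑ k, c i k • A k) * (∑ l, c i l • A l)ᴴ := by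
          simp only [hc]
      _ = ∑ i, ∑ l, ∑ k, (star (c i l) * c i k) • (A k * (A l)ᴴ) := by
          simp only [conjTranspose_sum, conjTranspose_smul, Finset.sum_mul, Finset.mul_sum,
            smul_mul_assoc, mul_smul_comm, smul_smul, Finset.smul_sum]
      _ = ∑ l, ∑ k, (∑ i, c i k * star (c i l)) • (A k * (A l)ᴴ) := by
          rw [Finset.sum_comm]
          refine Finset.sum_congr rfl fun l _ => ?_
          rw [Finset.sum_comm]
          refine Finset.sum_congr rfl fun k _ => ?_
          rw [Finset.sum_smul]
          exact Finset.sum_congr rfl fun i _ => by rw [mul_comm]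
      _ = ∑ k, A k * (A k)ᴴ := by
          simp only [hcc', ite_smul, one_smul, zero_smul, Finset.sum_ite_eq,
            Finset.sum_ite_eq', Finset.mem_univ, if_true]
  have hBB : ∀ i, B i * (B i)ᴴ = U * (A i * (A i)ᴴ) * Uᴴ := by
    intro i
    rw [hBdef]
    calc (U * A i * Uᴴ) * (U * A i * Uᴴ)ᴴ
        = U * (A i * ((Uᴴ * U) * ((A i)ᴴ * Uᴴ))) := by
          simp [conjTranspose_mul, Matrix.mul_assoc]
      _ = U * (A i * (A i)ᴴ) * Uᴴ := by rw [hU1, one_mul]; simp [Matrix.mul_assoc]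
  have hD : U * (∑ i, A i * (A i)ᴴ) * Uᴴ = ∑ i, A i * (A i)ᴴ := by
    conv_rhs => rw [← key]
    simp only [hBB, Finset.mul_sum, Finset.sum_mul]
  have := congrArg (· * U) hD
  beta_reduce at this
  rw [Matrix.mul_assoc, hU1, Matrix.mul_one] at this
  exact this
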